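/- (Corollary, Homogeneous Setting, part 2: Geometric Convergence.) Suppose the service rates are homogeneous, i.e. ν_i = ν > 0 for all i = 1,…,N. Then there exist constants φ with 0 < φ < 1 and δ with 0 < δ < ∞ such that for all k ≥ 1, all 0 ≤ n ≤ N and all m ∈ C_n, |p_n^{k+1}(m) − p_n^{k}(m)| ≤ φ^k·δ; in particular lim_{k→∞} |p_n^{k+1}(m) − p_n^{k}(m)| = 0. -/

import Mathlib

open Finset Filter

/-- Number of busy units in state `B`. -/
def wt {N : ℕ} (B : Fin N → Bool) : ℕ := (Finset.univ.filter fun i => B i = true).card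

/-- The layer `C_n`: states with exactly `n` busy units. -/
def layer (N n : ℕ) : Finset (Fin N → Bool) := Finset.univ.filter fun B => wt B = n

/-- The full state: all units busy. -/
def fullState (N : ℕ) : Fin N → Bool := fun _ => true

/-- Unit `i` is the most preferred free unit at node `j` in state `l`
(ranks are given by the permutation `ζ j`). -/
def dispatched {N J : ℕ} (ζ : Fin J → (Fin N ≃ Fin N)) (l : Fin N → Bool) (j : Fin J)
    (i : Fin N) : Prop :=
  l i = false ∧ ∀ h : Fin N, (h : ℕ) < ((ζ j).symm i : ℕ) → l ((ζ j) h) = true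

instance {N J : ℕ} (ζ : Fin J → (Fin N ≃ Fin N)) (l : Fin N → Bool) (j : Fin J) (i : Fin N) :
    Decidable (dispatched ζ l j i) := by
  unfold dispatched; infer_instance

/-- Upward transition rate `λ_{lm}`: nonzero only if `m` arises from `l` by flipping
one coordinate `i` from free to busy, in which case it is `λ` times the total demand
fraction of the nodes dispatching unit `i` in state `l`. -/
noncomputable def upRate {N J : ℕ} (lam : ℝ) (f : Fin J → ℝ) (ζ : Fin J → (Fin N ≃ Fin N))
    (l m : Fin N → Bool) : ℝ :=
  ∑ i : Fin N,
    if l i = false ∧ m = Function.update l i true then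
      lam * ∑ j : Fin J, if dispatched ζ l j i then f j else 0
    else 0

/-- Downward transition rate `μ_{lm}`: nonzero only if `m` arises from `l` by flipping
one coordinate `i` from busy to free, in which case it is `ν i`. -/
noncomputable def downRate {N : ℕ} (ν : Fin N → ℝ) (l m : Fin N → Bool) : ℝ :=
  ∑ i : Fin N, if l i = true ∧ m = Function.update l i false then ν i else 0

/-- Total upward rate `λ_m = Σ_l λ_{ml}` out of state `m`. -/
noncomputable def totalUp {N J : ℕ} (lam : ℝ) (f : Fin J → ℝ) (ζ : Fin J → (Fin N ≃ Fin N))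
    (m : Fin N → Bool) : ℝ :=
  ∑ l : Fin N → Bool, upRate lam f ζ m l

/-- Total service completion rate `μ_m = Σ_{i busy} ν i` out of state `m`. -/
noncomputable def totalDown {N : ℕ} (ν : Fin N → ℝ) (m : Fin N → Bool) : ℝ :=
  ∑ i : Fin N, if m i = true then ν i else 0

/-- `C^m_n`: the states of layer `n` at Hamming distance 1 from `m`. -/
def adjLayer {N : ℕ} (n : ℕ) (m : Fin N → Bool) : Finset (Fin N → Bool) :=
  (layer N n).filter fun l => (Finset.univ.filter fun i => l i ≠ m i).card = 1

/-- `λ^k(n) = Σ_{m ∈ C_n} p_n^k(m) · λ_m`. -/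
noncomputable def lamI {N J : ℕ} (lam : ℝ) (f : Fin J → ℝ) (ζ : Fin J → (Fin N ≃ Fin N))
    (pI : ℕ → ℕ → (Fin N → Bool) → ℝ) (k n : ℕ) : ℝ :=
  ∑ m ∈ layer N n, pI k n m * totalUp lam f ζ m

/-- `μ^k(n) = Σ_{m ∈ C_n} p_n^k(m) · μ_m`. -/
noncomputable def muI {N : ℕ} (ν : Fin N → ℝ) (pI : ℕ → ℕ → (Fin N → Bool) → ℝ) (k n : ℕ) : ℝ :=
  ∑ m ∈ layer N n, pI k n m * totalDown ν m

/-- `μ^{k,r}(n) = Σ_{m ∈ C_n} p_n^{k,r}(m) · μ_m`. -/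
noncomputable def muR {N : ℕ} (ν : Fin N → ℝ) (pR : ℕ → ℕ → ℕ → (Fin N → Bool) → ℝ)
    (k n r : ℕ) : ℝ :=
  ∑ m ∈ layer N n, pR k n r m * totalDown ν m

/-- The iterates of the CPU (Conditional Probability Update) algorithm:
`pI k n m` is the converged outer iterate `p_n^k(m)` and `pR k n r m` is the inner
iterate `p_n^{k,r}(m)`.  The converged value `p_n^k` is by definition the limit of
the inner iterates as `r → ∞`. -/
def IsCPUIterates {N J : ℕ} (lam : ℝ) (f : Fin J → ℝ) (ζ : Fin J → (Fin N ≃ Fin N))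
    (ν : Fin N → ℝ) (pI : ℕ → ℕ → (Fin N → Bool) → ℝ)
    (pR : ℕ → ℕ → ℕ → (Fin N → Bool) → ℝ) : Prop :=
  (∀ n ≤ N, ∀ m ∈ layer N n, pI 0 n m = 0) ∧
  (∀ n ≤ N, ∀ m ∈ layer N n, pI 1 n m = 1 / (N.choose n : ℝ)) ∧
  (∀ n ≤ N, ∀ r, 1 ≤ r → ∀ m ∈ layer N n, pR 1 n r m = 1 / (N.choose n : ℝ)) ∧
  (∀ k, 1 ≤ k → ∀ m ∈ layer N 0, pI k 0 m = 1) ∧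
  (∀ k, 1 ≤ k → ∀ m ∈ layer N N, pI k N m = 1) ∧
  (∀ k, 2 ≤ k → ∀ r, ∀ m ∈ layer N 0, pR k 0 r m = 1) ∧
  (∀ k, 2 ≤ k → ∀ r, ∀ m ∈ layer N N, pR k N r m = 1) ∧
  (∀ k, 2 ≤ k → ∀ n, 1 ≤ n → n ≤ N - 1 → ∀ m ∈ layer N n, pR k n 0 m = pI (k - 1) n m) ∧
  (∀ k, 2 ≤ k → ∀ n, 1 ≤ n → n ≤ N - 1 → ∀ r, 1 ≤ r → ∀ m ∈ layer N n,
    pR k n r m =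
      (∑ l ∈ layer N (n - 1),
        pI k (n - 1) l * (muR ν pR k n (r - 1) / lamI lam f ζ pI k (n - 1)) *
          (upRate lam f ζ l m / (totalUp lam f ζ m + totalDown ν m))) +
      (∑ l ∈ adjLayer (n + 1) m,
        pI (k - 1) (n + 1) l * (lamI lam f ζ pI (k - 1) n / muI ν pI (k - 1) (n + 1)) *
          (downRate ν l m / (totalUp lam f ζ m + totalDown ν m)))) ∧
  (∀ k, 2 ≤ k → ∀ n, 1 ≤ n → n ≤ N - 1 → ∀ m ∈ layer N n,
    Filter.Tendsto (fun r => pR k n r m) Filter.atTop (nhds (pI k n m)))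

section Helpers
variable {N J : ℕ}

lemma mem_layer_iff {B : Fin N → Bool} {n : ℕ} : B ∈ layer N n ↔ wt B = n := by
  simp [layer]

lemma wt_update_true {l : Fin N → Bool} {i : Fin N} (h : l i = false) :
    wt (Function.update l i true) = wt l + 1 := by
  classical
  have hset : (Finset.univ.filter fun x => Function.update l i true x = true)
      = insert i (Finset.univ.filter fun x => l x = true) := by
    ext x
    by_cases hx : x = i <;> simp [Function.update_apply, hx, h]
  have hnot : i ∉ (Finset.univ.filter fun x => l x = true) := by simp [h]
  simp [wt, hset, Finset.card_insert_of_notMem hnot]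

lemma wt_update_false {l : Fin N → Bool} {i : Fin N} (h : l i = true) :
    wt l = wt (Function.update l i false) + 1 := by
  classical
  have h' : Function.update l i false i = false := by simp
  have h2 := wt_update_true (l := Function.update l i false) (i := i) h'
  have hupd : Function.update (Function.update l i false) i true = l := by
    ext x; by_cases hx : x = i <;> simp [Function.update_apply, hx, h]
  rw [hupd] at h2; omega

lemma wt_le_N (B : Fin N → Bool) : wt B ≤ N := by
  classical
  have := Finset.card_filter_le (Finset.univ : Finset (Fin N)) (fun i => B i = true)
  simpa [wt] using this

lemma exists_false_of_wt_lt {B : Fin N → Bool} (h : wt B < N) : ∃ i, B i = false := by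
  classical
  by_contra hc
  push_neg at hc
  have hall : ∀ i, B i = true := by
    intro i; cases hB : B i
    · exact absurd hB (hc i)
    · rfl
  have : (Finset.univ.filter fun i => B i = true) = Finset.univ := by
    apply Finset.filter_true_of_mem; intro i _; exact hall i
  simp [wt, this] at h

lemma exists_true_of_wt_pos {B : Fin N → Bool} (h : 0 < wt B) : ∃ i, B i = true := by
  classical
  obtain ⟨i, hi⟩ := Finset.card_pos.mp h
  exact ⟨i, (Finset.mem_filter.mp hi).2⟩

lemma layer_zero : layer N 0 = {fun _ => false} := by
  classical
  ext B
  simp only [mem_layer_iff, Finset.mem_singleton, wt, Finset.card_eq_zero,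
    Finset.filter_eq_empty_iff]
  constructor
  · intro h; funext i
    have := h (Finset.mem_univ i)
    simpa using this
  · intro h i _; simp [h]

lemma layer_full : layer N N = {fullState N} := by
  classical
  ext B
  simp only [mem_layer_iff, Finset.mem_singleton]
  constructor
  · intro h
    have hsub : (Finset.univ.filter fun i => B i = true) = Finset.univ := by
      apply Finset.eq_univ_of_card
      simpa [wt] using h
    funext i
    have : i ∈ Finset.univ.filter fun i => B i = true := by rw [hsub]; exact Finset.mem_univ i
    simpa [fullState] using (Finset.mem_filter.mp this).2
  · intro h; subst h
    simp [wt, fullState, Finset.filter_true_of_mem]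

lemma card_layer (n : ℕ) : (layer N n).card = N.choose n := by
  classical
  rw [show N.choose n = ((Finset.univ : Finset (Fin N)).powersetCard n).card by
    simp [Finset.card_powersetCard]]
  apply Finset.card_bij (fun B _ => Finset.univ.filter fun i => B i = true)
  · intro B hB
    rw [Finset.mem_powersetCard]
    exact ⟨Finset.filter_subset _ _, by simpa [wt] using (mem_layer_iff.mp hB)⟩
  · intro B hB B' hB' h
    funext i
    have := Finset.ext_iff.mp h i
    simp only [Finset.mem_filter, Finset.mem_univ, true_and] at this
    cases hB2 : B i
    · cases hB3 : B' i
      · rfl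
      · exact absurd (this.mpr hB3) (by simp [hB2])
    · exact (this.mp hB2).symm
  · intro s hs
    rw [Finset.mem_powersetCard] at hs
    refine ⟨fun i => decide (i ∈ s), ?_, ?_⟩
    · rw [mem_layer_iff]
      have : (Finset.univ.filter fun i => decide (i ∈ s) = true) = s := by
        ext i; simp
      simp [wt, this, hs.2]
    · ext i; simp

end Helpers
section Rates
variable {N J : ℕ} {lam nu0 : ℝ} {f : Fin J → ℝ} {ζ : Fin J → (Fin N ≃ Fin N)} {ν : Fin N → ℝ}

lemma existsUnique_dispatched (ζ : Fin J → (Fin N ≃ Fin N)) {l : Fin N → Bool}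
    (hl : ∃ i, l i = false) (j : Fin J) : ∃! i, dispatched ζ l j i := by
  classical
  obtain ⟨i0, hi0⟩ := hl
  set s : Finset (Fin N) := Finset.univ.filter (fun h => l ((ζ j) h) = false) with hs
  have hne : s.Nonempty := ⟨(ζ j).symm i0, by simp [hs, hi0]⟩
  set h0 := s.min' hne with hh0
  have hh0mem : h0 ∈ s := s.min'_mem hne
  have hl0 : l ((ζ j) h0) = false := by
    have := hh0mem; rw [hs, Finset.mem_filter] at this; exact this.2
  constructor
  · constructor
    · constructor
      · exact hl0
      · intro h hlt
        rw [Equiv.symm_apply_apply] at hlt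
        by_contra hc
        rw [Bool.not_eq_true] at hc
        have hmem : h ∈ s := by rw [hs, Finset.mem_filter]; exact ⟨Finset.mem_univ _, hc⟩
        have := s.min'_le h hmem
        rw [← hh0] at this
        have hlt' : h < h0 := by rwa [Fin.lt_def]
        exact absurd this (not_le.mpr hlt')
    · rintro i ⟨hif, hipref⟩
      have hmem : (ζ j).symm i ∈ s := by
        rw [hs, Finset.mem_filter]
        refine ⟨Finset.mem_univ _, ?_⟩
        rw [Equiv.apply_symm_apply]; exact hif
      have hle : h0 ≤ (ζ j).symm i := by rw [hh0]; exact s.min'_le _ hmem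
      rcases lt_or_eq_of_le hle with hlt | heq
      · have := hipref h0 (by rwa [Fin.lt_def] at hlt)
        rw [this] at hl0; exact absurd hl0 (by simp)
      · rw [heq, Equiv.apply_symm_apply]
  -- (the structure above already gives ∃!; written as constructor of And inside)

lemma sum_dispatched {l : Fin N → Bool} (hl : ∃ i, l i = false) (j : Fin J) :
    ∑ i : Fin N, (if dispatched ζ l j i then f j else 0) = f j := by
  classical
  obtain ⟨i0, hdisp, huniq⟩ := existsUnique_dispatched ζ hl j
  rw [Finset.sum_eq_single i0]
  · rw [if_pos hdisp]
  · intro b _ hb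
    rw [if_neg]
    intro hd
    exact hb (huniq b hd)
  · intro h; exact absurd (Finset.mem_univ i0) h

lemma totalUp_eq (hfsum : ∑ j, f j = 1) {m : Fin N → Bool} (hm : ∃ i, m i = false) :
    totalUp lam f ζ m = lam := by
  classical
  unfold totalUp upRate
  rw [Finset.sum_comm]
  have hstep : ∀ i : Fin N,
      (∑ l : Fin N → Bool, if m i = false ∧ l = Function.update m i true then
        lam * ∑ j : Fin J, if dispatched ζ m j i then f j else 0 else 0)
      = lam * ∑ j : Fin J, if dispatched ζ m j i then f j else 0 := by
    intro i
    by_cases hmi : m i = false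
    · simp only [hmi, true_and]
      rw [Finset.sum_ite_eq' Finset.univ (Function.update m i true)]
      simp
    · simp only [hmi, false_and, if_false, Finset.sum_const_zero]
      have : ∀ j : Fin J, (if dispatched ζ m j i then f j else 0) = 0 := by
        intro j
        rw [if_neg]
        intro hd
        exact hmi hd.1
      rw [Finset.sum_congr rfl (fun j _ => this j)]
      simp
  rw [Finset.sum_congr rfl (fun i _ => hstep i)]
  rw [← Finset.mul_sum, Finset.sum_comm]
  rw [Finset.sum_congr rfl (fun j _ => sum_dispatched hm j), hfsum, mul_one]

lemma totalDown_eq (hhom : ∀ i, ν i = nu0) (m : Fin N → Bool) :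
    totalDown ν m = (wt m : ℝ) * nu0 := by
  classical
  unfold totalDown
  rw [Finset.sum_congr rfl (fun i _ => by rw [hhom i])]
  rw [← Finset.sum_filter, Finset.sum_const]
  rw [wt, nsmul_eq_mul]

lemma upRate_nonneg (hlam : 0 ≤ lam) (hf : ∀ j, 0 ≤ f j) (l m : Fin N → Bool) :
    0 ≤ upRate lam f ζ l m := by
  apply Finset.sum_nonneg
  intro i _
  split
  · apply mul_nonneg hlam
    apply Finset.sum_nonneg
    intro j _
    split
    · exact hf j
    · exact le_refl 0
  · exact le_refl 0

lemma upRate_ne_zero {l m : Fin N → Bool} (h : upRate lam f ζ l m ≠ 0) :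
    ∃ i, l i = false ∧ m = Function.update l i true := by
  by_contra hc
  push_neg at hc
  apply h
  apply Finset.sum_eq_zero
  intro i _
  rw [if_neg]
  rintro ⟨h1, h2⟩
  exact (hc i h1) h2

lemma downRate_nonneg (hν : ∀ i, 0 ≤ ν i) (l m : Fin N → Bool) :
    0 ≤ downRate ν l m := by
  apply Finset.sum_nonneg
  intro i _
  split
  · exact hν i
  · exact le_refl 0

lemma downRate_ne_zero {l m : Fin N → Bool} (h : downRate ν l m ≠ 0) :
    ∃ i, l i = true ∧ m = Function.update l i false := by
  by_contra hc
  push_neg at hc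
  apply h
  apply Finset.sum_eq_zero
  intro i _
  rw [if_neg]
  rintro ⟨h1, h2⟩
  exact (hc i h1) h2

lemma sum_upRate_layer (hfsum : ∑ j, f j = 1) {l : Fin N → Bool} (hl : wt l < N) :
    ∑ m ∈ layer N (wt l + 1), upRate lam f ζ l m = lam := by
  classical
  have h1 : ∑ m : Fin N → Bool, upRate lam f ζ l m = lam :=
    totalUp_eq hfsum (exists_false_of_wt_lt hl)
  refine Eq.trans ?_ h1
  apply Finset.sum_subset (Finset.subset_univ _)
  intro m _ hm
  by_contra h0
  obtain ⟨i, hif, hup⟩ := upRate_ne_zero h0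
  apply hm
  rw [mem_layer_iff, hup, wt_update_true hif]

lemma sum_downRate_univ (l : Fin N → Bool) :
    ∑ m : Fin N → Bool, downRate ν l m = totalDown ν l := by
  classical
  unfold downRate totalDown
  rw [Finset.sum_comm]
  apply Finset.sum_congr rfl
  intro i _
  by_cases hli : l i = true
  · simp only [hli, true_and, if_true]
    rw [Finset.sum_ite_eq' Finset.univ (Function.update l i false)]
    simp
  · simp [hli]

lemma sum_downRate_layer {l : Fin N → Bool} :
    ∑ m ∈ layer N (wt l - 1), downRate ν l m = totalDown ν l := by
  classical
  rw [← sum_downRate_univ l]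
  apply Finset.sum_subset (Finset.subset_univ _)
  intro m _ hm
  by_contra h0
  obtain ⟨i, hit, hdn⟩ := downRate_ne_zero h0
  apply hm
  have := wt_update_false hit
  rw [mem_layer_iff, hdn]
  omega

lemma mem_adjLayer_of_downRate {m l : Fin N → Bool} {n : ℕ} (hlmem : l ∈ layer N n)
    (h : downRate ν l m ≠ 0) : l ∈ adjLayer n m := by
  classical
  obtain ⟨i, hit, hm⟩ := downRate_ne_zero h
  refine Finset.mem_filter.mpr ⟨hlmem, ?_⟩
  subst hm
  have : (Finset.univ.filter fun x => l x ≠ Function.update l i false x) = {i} := by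
    ext x
    by_cases hx : x = i <;> simp [Function.update_apply, hx, hit]
  rw [this, Finset.card_singleton]

lemma sum_adj_eq_sum_layer {m : Fin N → Bool} (n : ℕ) (g : (Fin N → Bool) → ℝ) :
    ∑ l ∈ adjLayer n m, g l * downRate ν l m = ∑ l ∈ layer N n, g l * downRate ν l m := by
  apply Finset.sum_subset (Finset.filter_subset _ _)
  intro l hl hnot
  by_cases hd : downRate ν l m = 0
  · rw [hd, mul_zero]
  · exact absurd (mem_adjLayer_of_downRate hl hd) hnot

end Rates
section Shape
variable {N J : ℕ} {lam nu0 : ℝ} {f : Fin J → ℝ} {ζ : Fin J → (Fin N ≃ Fin N)} {ν : Fin N → ℝ}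

lemma sum_sum_up (hfsum : ∑ j, f j = 1) {n : ℕ} (hn1 : 1 ≤ n) (hnN : n ≤ N - 1) (hN : 2 ≤ N)
    (g : (Fin N → Bool) → ℝ) :
    ∑ m ∈ layer N n, ∑ l ∈ layer N (n-1), g l * upRate lam f ζ l m
      = lam * ∑ l ∈ layer N (n-1), g l := by
  rw [Finset.sum_comm]
  have h1 : ∀ l ∈ layer N (n-1),
      ∑ m ∈ layer N n, g l * upRate lam f ζ l m = g l * lam := by
    intro l hl
    have hwt := mem_layer_iff.mp hl
    rw [← Finset.mul_sum]
    congr 1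
    have h2 : wt l + 1 = n := by omega
    have h3 : wt l < N := by omega
    rw [← h2]
    exact sum_upRate_layer hfsum h3
  rw [Finset.sum_congr rfl h1, ← Finset.sum_mul, mul_comm]

lemma sum_sum_down (hhom : ∀ i, ν i = nu0) {n : ℕ} (hn : n + 1 ≤ N)
    (g : (Fin N → Bool) → ℝ) :
    ∑ m ∈ layer N n, ∑ l ∈ adjLayer (n+1) m, g l * downRate ν l m
      = ((n:ℝ)+1) * nu0 * ∑ l ∈ layer N (n+1), g l := by
  have h0 : ∀ m ∈ layer N n, ∑ l ∈ adjLayer (n+1) m, g l * downRate ν l m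
      = ∑ l ∈ layer N (n+1), g l * downRate ν l m := by
    intro m _
    exact sum_adj_eq_sum_layer (n+1) g
  rw [Finset.sum_congr rfl h0, Finset.sum_comm]
  have h1 : ∀ l ∈ layer N (n+1),
      ∑ m ∈ layer N n, g l * downRate ν l m = g l * (((n:ℝ)+1) * nu0) := by
    intro l hl
    have hwt := mem_layer_iff.mp hl
    rw [← Finset.mul_sum]
    congr 1
    have h2 : wt l - 1 = n := by omega
    have h3 := sum_downRate_layer (ν := ν) (l := l)
    rw [h2] at h3
    rw [h3, totalDown_eq hhom, hwt]
    push_cast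
    ring
  rw [Finset.sum_congr rfl h1, ← Finset.sum_mul, mul_comm]

lemma sum_shape (hfsum : ∑ j, f j = 1) (hhom : ∀ i, ν i = nu0) (hN : 2 ≤ N)
    {n : ℕ} (hn1 : 1 ≤ n) (hnN : n ≤ N - 1)
    (g1 g2 : (Fin N → Bool) → ℝ) (a b D : ℝ) :
    ∑ m ∈ layer N n, ((∑ l ∈ layer N (n-1), g1 l * a * (upRate lam f ζ l m / D))
      + (∑ l ∈ adjLayer (n+1) m, g2 l * b * (downRate ν l m / D)))
    = lam * (∑ l ∈ layer N (n-1), g1 l) * (a / D)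
      + ((n:ℝ)+1) * nu0 * (∑ l ∈ layer N (n+1), g2 l) * (b / D) := by
  rw [Finset.sum_add_distrib]
  congr 1
  · have h1 : ∀ m ∈ layer N n,
        (∑ l ∈ layer N (n-1), g1 l * a * (upRate lam f ζ l m / D))
        = (∑ l ∈ layer N (n-1), g1 l * upRate lam f ζ l m) * (a / D) := by
      intro m _
      rw [Finset.sum_mul]
      apply Finset.sum_congr rfl
      intro l _
      ring
    rw [Finset.sum_congr rfl h1, ← Finset.sum_mul, sum_sum_up hfsum hn1 hnN hN]
  · have h1 : ∀ m ∈ layer N n,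
        (∑ l ∈ adjLayer (n+1) m, g2 l * b * (downRate ν l m / D))
        = (∑ l ∈ adjLayer (n+1) m, g2 l * downRate ν l m) * (b / D) := by
      intro m _
      rw [Finset.sum_mul]
      apply Finset.sum_congr rfl
      intro l _
      ring
    rw [Finset.sum_congr rfl h1, ← Finset.sum_mul, sum_sum_down hhom (by omega)]

end Shape

/-- The explicit linear-recursion form of the CPU iterate in the homogeneous setting. -/
noncomputable def Eform {N J : ℕ} (lam nu0 : ℝ) (f : Fin J → ℝ) (ζ : Fin J → (Fin N ≃ Fin N))
    (ν : Fin N → ℝ) (pI : ℕ → ℕ → (Fin N → Bool) → ℝ) (k n : ℕ) (m : Fin N → Bool) : ℝ :=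
  (∑ l ∈ layer N (n-1), pI k (n-1) l * ((n:ℝ) * nu0 / lam)
      * (upRate lam f ζ l m / (lam + (n:ℝ) * nu0)))
  + (∑ l ∈ adjLayer (n+1) m, pI (k-1) (n+1) l * (lam / (((n:ℝ)+1) * nu0))
      * (downRate ν l m / (lam + (n:ℝ) * nu0)))

section EformLemmas
variable {N J : ℕ} {lam nu0 : ℝ} {f : Fin J → ℝ} {ζ : Fin J → (Fin N ≃ Fin N)} {ν : Fin N → ℝ}
  {pI : ℕ → ℕ → (Fin N → Bool) → ℝ}

lemma sum_Eform (hlam : 0 < lam) (hnu0 : 0 < nu0) (hfsum : ∑ j, f j = 1)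
    (hhom : ∀ i, ν i = nu0) (hN : 2 ≤ N) (k : ℕ) {n : ℕ} (hn1 : 1 ≤ n) (hnN : n ≤ N - 1)
    (hS1 : ∑ l ∈ layer N (n-1), pI k (n-1) l = 1)
    (hS3 : ∑ l ∈ layer N (n+1), pI (k-1) (n+1) l = 1) :
    ∑ m ∈ layer N n, Eform lam nu0 f ζ ν pI k n m = 1 := by
  unfold Eform
  rw [sum_shape hfsum hhom hN hn1 hnN _ _ _ _ _, hS1, hS3]
  have hD : lam + (n:ℝ) * nu0 > 0 := by positivity
  field_simp
  ring

lemma Eform_sub {k n : ℕ} (hk : 1 ≤ k) (m : Fin N → Bool) :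
    Eform lam nu0 f ζ ν (fun k n m => pI (k+1) n m - pI k n m) k n m
      = Eform lam nu0 f ζ ν pI (k+1) n m - Eform lam nu0 f ζ ν pI k n m := by
  obtain ⟨k', rfl⟩ : ∃ k', k = k' + 1 := ⟨k-1, by omega⟩
  unfold Eform
  simp only [Nat.add_sub_cancel]
  have hre : ∀ (A1 A2 B1 B2 : ℝ), (A1+A2)-(B1+B2) = (A1-B1)+(A2-B2) := by intros; ring
  rw [hre, ← Finset.sum_sub_distrib, ← Finset.sum_sub_distrib]
  congr 1
  · apply Finset.sum_congr rfl; intro l _; ring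
  · apply Finset.sum_congr rfl; intro l _; ring

end EformLemmas
section Key
variable {N J : ℕ} {lam nu0 : ℝ} {f : Fin J → ℝ} {ζ : Fin J → (Fin N ≃ Fin N)} {ν : Fin N → ℝ}
  {pI : ℕ → ℕ → (Fin N → Bool) → ℝ} {pR : ℕ → ℕ → ℕ → (Fin N → Bool) → ℝ}

lemma key_lemma (hN : 2 ≤ N) (hlam : 0 < lam) (hnu0 : 0 < nu0)
    (hfsum : ∑ j, f j = 1) (hhom : ∀ i, ν i = nu0)
    (h0 : ∀ k, 2 ≤ k → ∀ n, 1 ≤ n → n ≤ N - 1 → ∀ m ∈ layer N n, pR k n 0 m = pI (k - 1) n m)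
    (hrec : ∀ k, 2 ≤ k → ∀ n, 1 ≤ n → n ≤ N - 1 → ∀ r, 1 ≤ r → ∀ m ∈ layer N n,
      pR k n r m =
        (∑ l ∈ layer N (n - 1),
          pI k (n - 1) l * (muR ν pR k n (r - 1) / lamI lam f ζ pI k (n - 1)) *
            (upRate lam f ζ l m / (totalUp lam f ζ m + totalDown ν m))) +
        (∑ l ∈ adjLayer (n + 1) m,
          pI (k - 1) (n + 1) l * (lamI lam f ζ pI (k - 1) n / muI ν pI (k - 1) (n + 1)) *
            (downRate ν l m / (totalUp lam f ζ m + totalDown ν m))))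
    (hconv : ∀ k, 2 ≤ k → ∀ n, 1 ≤ n → n ≤ N - 1 → ∀ m ∈ layer N n,
      Filter.Tendsto (fun r => pR k n r m) Filter.atTop (nhds (pI k n m)))
    (k : ℕ) (hk : 2 ≤ k) (n : ℕ) (hn1 : 1 ≤ n) (hnN : n ≤ N - 1)
    (hS1 : ∑ l ∈ layer N (n-1), pI k (n-1) l = 1)
    (hS2 : ∑ l ∈ layer N n, pI (k-1) n l = 1)
    (hS3 : ∑ l ∈ layer N (n+1), pI (k-1) (n+1) l = 1) :
    (∀ m ∈ layer N n, pI k n m = Eform lam nu0 f ζ ν pI k n m)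
      ∧ ∑ l ∈ layer N n, pI k n l = 1 := by
  -- scalar values
  have hlamI1 : lamI lam f ζ pI k (n-1) = lam := by
    unfold lamI
    have h1 : ∀ m ∈ layer N (n-1), pI k (n-1) m * totalUp lam f ζ m
        = pI k (n-1) m * lam := by
      intro m hm
      rw [totalUp_eq hfsum (exists_false_of_wt_lt
        (by have := mem_layer_iff.mp hm; omega))]
    rw [Finset.sum_congr rfl h1, ← Finset.sum_mul, hS1, one_mul]
  have hlamI2 : lamI lam f ζ pI (k-1) n = lam := by
    unfold lamI
    have h1 : ∀ m ∈ layer N n, pI (k-1) n m * totalUp lam f ζ m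
        = pI (k-1) n m * lam := by
      intro m hm
      rw [totalUp_eq hfsum (exists_false_of_wt_lt
        (by have := mem_layer_iff.mp hm; omega))]
    rw [Finset.sum_congr rfl h1, ← Finset.sum_mul, hS2, one_mul]
  have hmuI : muI ν pI (k-1) (n+1) = ((n:ℝ)+1) * nu0 := by
    unfold muI
    have h1 : ∀ m ∈ layer N (n+1), pI (k-1) (n+1) m * totalDown ν m
        = pI (k-1) (n+1) m * (((n:ℝ)+1) * nu0) := by
      intro m hm
      rw [totalDown_eq hhom, mem_layer_iff.mp hm]
      push_cast
      ring
    rw [Finset.sum_congr rfl h1, ← Finset.sum_mul, hS3, one_mul]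
  have hD : ∀ m ∈ layer N n, totalUp lam f ζ m + totalDown ν m = lam + (n:ℝ) * nu0 := by
    intro m hm
    rw [totalUp_eq hfsum (exists_false_of_wt_lt
      (by have := mem_layer_iff.mp hm; omega))]
    rw [totalDown_eq hhom, mem_layer_iff.mp hm]
  -- one inner step turns the iterate into the explicit form
  have hstep : ∀ r, (∑ m ∈ layer N n, pR k n r m = 1) →
      ∀ m ∈ layer N n, pR k n (r+1) m = Eform lam nu0 f ζ ν pI k n m := by
    intro r hSr m hm
    have hmuR : muR ν pR k n r = (n:ℝ) * nu0 := by
      unfold muR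
      have h1 : ∀ m ∈ layer N n, pR k n r m * totalDown ν m
          = pR k n r m * ((n:ℝ) * nu0) := by
        intro m hm
        rw [totalDown_eq hhom, mem_layer_iff.mp hm]
      rw [Finset.sum_congr rfl h1, ← Finset.sum_mul, hSr, one_mul]
    rw [hrec k hk n hn1 hnN (r+1) (by omega) m hm]
    simp only [Nat.add_sub_cancel]
    rw [hmuR, hlamI1, hlamI2, hmuI, hD m hm]
    rfl
  -- all inner sums are 1
  have hSr : ∀ r, ∑ m ∈ layer N n, pR k n r m = 1 := by
    intro r
    induction r with
    | zero =>
      rw [Finset.sum_congr rfl (fun m hm => h0 k hk n hn1 hnN m hm)]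
      exact hS2
    | succ r ih =>
      rw [Finset.sum_congr rfl (fun m hm => hstep r ih m hm)]
      exact sum_Eform hlam hnu0 hfsum hhom hN k hn1 hnN hS1 hS3
  -- the inner iterates are eventually constant, so the limit equals the constant
  have hpoint : ∀ m ∈ layer N n, pI k n m = Eform lam nu0 f ζ ν pI k n m := by
    intro m hm
    have h1 : Filter.Tendsto (fun r => pR k n r m) Filter.atTop
        (nhds (Eform lam nu0 f ζ ν pI k n m)) := by
      apply Filter.Tendsto.congr' _ tendsto_const_nhds
      filter_upwards [Filter.eventually_ge_atTop 1] with r hr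
      obtain ⟨r', rfl⟩ : ∃ r', r = r' + 1 := ⟨r - 1, by omega⟩
      exact (hstep r' (hSr r') m hm).symm
    exact tendsto_nhds_unique (hconv k hk n hn1 hnN m hm) h1
  refine ⟨hpoint, ?_⟩
  rw [Finset.sum_congr rfl hpoint]
  exact sum_Eform hlam hnu0 hfsum hhom hN k hn1 hnN hS1 hS3

end Key
section SAll
variable {N J : ℕ} {lam nu0 : ℝ} {f : Fin J → ℝ} {ζ : Fin J → (Fin N ≃ Fin N)} {ν : Fin N → ℝ}
  {pI : ℕ → ℕ → (Fin N → Bool) → ℝ} {pR : ℕ → ℕ → ℕ → (Fin N → Bool) → ℝ}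

lemma S_all (hN : 2 ≤ N) (hlam : 0 < lam) (hnu0 : 0 < nu0)
    (hfsum : ∑ j, f j = 1) (hhom : ∀ i, ν i = nu0)
    (hiter : IsCPUIterates lam f ζ ν pI pR) :
    ∀ k, 1 ≤ k → ∀ n, n ≤ N → ∑ l ∈ layer N n, pI k n l = 1 := by
  obtain ⟨-, h2, -, h4, h5, -, -, h8, h9, h10⟩ := hiter
  intro k hk
  induction k, hk using Nat.le_induction with
  | base =>
    intro n hn
    have hchoose : (0:ℝ) < (N.choose n : ℝ) := by
      exact_mod_cast Nat.choose_pos hn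
    rw [Finset.sum_congr rfl (fun m hm => h2 n hn m hm), Finset.sum_const, card_layer]
    rw [nsmul_eq_mul]
    field_simp
  | succ k hk ih =>
    have hsingle0 : ∑ l ∈ layer N 0, pI (k+1) 0 l = 1 := by
      rw [Finset.sum_congr rfl (fun m hm => h4 (k+1) (by omega) m hm), Finset.sum_const,
        card_layer, Nat.choose_zero_right]
      simp
    have hsingleN : ∑ l ∈ layer N N, pI (k+1) N l = 1 := by
      rw [Finset.sum_congr rfl (fun m hm => h5 (k+1) (by omega) m hm), Finset.sum_const,
        card_layer, Nat.choose_self]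
      simp
    intro n
    induction n with
    | zero => intro _; exact hsingle0
    | succ n ihn =>
      intro hn
      rcases Nat.lt_or_ge (n+1) N with hlt | hge
      · have hnN : n + 1 ≤ N - 1 := by omega
        have hkey := key_lemma hN hlam hnu0 hfsum hhom h8 h9 h10 (k+1) (by omega)
          (n+1) (by omega) hnN ?_ ?_ ?_
        · exact hkey.2
        · simpa using ihn (by omega)
        · simpa using ih (n+1) (by omega)
        · simpa using ih (n+2) (by omega)
      · have : n + 1 = N := by omega
        rw [this]
        exact hsingleN

lemma G_all (hN : 2 ≤ N) (hlam : 0 < lam) (hnu0 : 0 < nu0)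
    (hfsum : ∑ j, f j = 1) (hhom : ∀ i, ν i = nu0)
    (hiter : IsCPUIterates lam f ζ ν pI pR) :
    ∀ k, 2 ≤ k → ∀ n, 1 ≤ n → n ≤ N - 1 → ∀ m ∈ layer N n,
      pI k n m = Eform lam nu0 f ζ ν pI k n m := by
  have hS := S_all hN hlam hnu0 hfsum hhom hiter
  obtain ⟨-, -, -, -, -, -, -, h8, h9, h10⟩ := hiter
  intro k hk n hn1 hnN
  exact (key_lemma hN hlam hnu0 hfsum hhom h8 h9 h10 k hk n hn1 hnN
    (hS k (by omega) (n-1) (by omega))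
    (hS (k-1) (by omega) n (by omega))
    (hS (k-1) (by omega) (n+1) (by omega))).1

end SAll
section Contract
variable {N J : ℕ} {lam nu0 : ℝ} {f : Fin J → ℝ} {ζ : Fin J → (Fin N ≃ Fin N)} {ν : Fin N → ℝ}
  {pI : ℕ → ℕ → (Fin N → Bool) → ℝ} {pR : ℕ → ℕ → ℕ → (Fin N → Bool) → ℝ}

lemma L_rec (hN : 2 ≤ N) (hlam : 0 < lam) (hnu0 : 0 < nu0)
    (hf : ∀ j, 0 ≤ f j) (hfsum : ∑ j, f j = 1) (hhom : ∀ i, ν i = nu0)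
    (hiter : IsCPUIterates lam f ζ ν pI pR)
    (k : ℕ) (hk : 2 ≤ k) (n : ℕ) (hn1 : 1 ≤ n) (hnN : n ≤ N - 1) :
    ∑ m ∈ layer N n, |pI (k+1) n m - pI k n m|
      ≤ ((n:ℝ)*nu0/(lam + (n:ℝ)*nu0))
          * ∑ l ∈ layer N (n-1), |pI (k+1) (n-1) l - pI k (n-1) l|
        + (lam/(lam + (n:ℝ)*nu0))
          * ∑ l ∈ layer N (n+1), |pI k (n+1) l - pI (k-1) (n+1) l| := by
  have hG := G_all hN hlam hnu0 hfsum hhom hiter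
  have hD0 : (0:ℝ) < lam + (n:ℝ)*nu0 := by positivity
  have hν0 : ∀ i, 0 ≤ ν i := fun i => by rw [hhom i]; exact hnu0.le
  have ha : (0:ℝ) ≤ (n:ℝ)*nu0/lam := by positivity
  have hb : (0:ℝ) ≤ lam/(((n:ℝ)+1)*nu0) := by positivity
  have hk1 : k - 1 + 1 = k := by omega
  have hdiff : ∀ m ∈ layer N n, pI (k+1) n m - pI k n m
      = Eform lam nu0 f ζ ν (fun k n m => pI (k+1) n m - pI k n m) k n m := by
    intro m hm
    rw [hG (k+1) (by omega) n hn1 hnN m hm, hG k hk n hn1 hnN m hm]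
    exact (Eform_sub (by omega) m).symm
  have habs : ∀ m ∈ layer N n, |pI (k+1) n m - pI k n m|
      ≤ (∑ l ∈ layer N (n-1),
          |pI (k+1) (n-1) l - pI k (n-1) l| * ((n:ℝ)*nu0/lam)
            * (upRate lam f ζ l m / (lam + (n:ℝ)*nu0)))
        + (∑ l ∈ adjLayer (n+1) m,
          |pI k (n+1) l - pI (k-1) (n+1) l| * (lam/(((n:ℝ)+1)*nu0))
            * (downRate ν l m / (lam + (n:ℝ)*nu0))) := by
    intro m hm
    rw [hdiff m hm]
    unfold Eform
    simp only [hk1]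
    refine le_trans (abs_add_le _ _) (add_le_add ?_ ?_)
    · refine le_trans (Finset.abs_sum_le_sum_abs _ _) (Finset.sum_le_sum ?_)
      intro l _
      rw [abs_mul, abs_mul, abs_of_nonneg ha,
        abs_of_nonneg (div_nonneg (upRate_nonneg hlam.le hf l m) hD0.le)]
    · refine le_trans (Finset.abs_sum_le_sum_abs _ _) (Finset.sum_le_sum ?_)
      intro l _
      rw [abs_mul, abs_mul, abs_of_nonneg hb,
        abs_of_nonneg (div_nonneg (downRate_nonneg hν0 l m) hD0.le)]
  refine le_trans (Finset.sum_le_sum habs) ?_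
  rw [sum_shape hfsum hhom hN hn1 hnN _ _ _ _ _]
  apply le_of_eq
  have hlam' : lam ≠ 0 := ne_of_gt hlam
  have hnn : ((n:ℝ)+1)*nu0 ≠ 0 := by positivity
  have hD' : lam + (n:ℝ)*nu0 ≠ 0 := ne_of_gt hD0
  field_simp

end Contract
/-- The contraction factor of layer `j`. -/
noncomputable def alphaC (lam nu0 : ℝ) (j : ℕ) : ℝ := (j:ℝ)*nu0/(lam + (j:ℝ)*nu0)

/-- Partial products of the contraction factors. -/
noncomputable def Aprod (lam nu0 : ℝ) (n : ℕ) : ℝ := ∏ j ∈ Finset.Icc 1 n, alphaC lam nu0 j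

section Alpha
variable {lam nu0 : ℝ}

lemma alphaC_nonneg (hlam : 0 < lam) (hnu0 : 0 < nu0) (j : ℕ) : 0 ≤ alphaC lam nu0 j := by
  unfold alphaC; positivity

lemma alphaC_pos (hlam : 0 < lam) (hnu0 : 0 < nu0) {j : ℕ} (hj : 1 ≤ j) :
    0 < alphaC lam nu0 j := by
  unfold alphaC
  have : (0:ℝ) < (j:ℝ) := by exact_mod_cast hj
  positivity

lemma alphaC_lt_one (hlam : 0 < lam) (hnu0 : 0 < nu0) (j : ℕ) : alphaC lam nu0 j < 1 := by
  unfold alphaC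
  rw [div_lt_one (by positivity)]
  linarith

lemma Aprod_zero : Aprod lam nu0 0 = 1 := by
  unfold Aprod; simp

lemma Aprod_succ (n : ℕ) : Aprod lam nu0 (n+1) = Aprod lam nu0 n * alphaC lam nu0 (n+1) := by
  unfold Aprod
  rw [Finset.prod_Icc_succ_top (by omega)]

lemma Aprod_pos (hlam : 0 < lam) (hnu0 : 0 < nu0) (n : ℕ) : 0 < Aprod lam nu0 n := by
  unfold Aprod
  apply Finset.prod_pos
  intro j hj
  exact alphaC_pos hlam hnu0 (Finset.mem_Icc.mp hj).1

lemma Aprod_le_one (hlam : 0 < lam) (hnu0 : 0 < nu0) (n : ℕ) : Aprod lam nu0 n ≤ 1 := by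
  unfold Aprod
  apply Finset.prod_le_one
  · intro j _; exact alphaC_nonneg hlam hnu0 j
  · intro j _; exact (alphaC_lt_one hlam hnu0 j).le

lemma Aprod_anti (hlam : 0 < lam) (hnu0 : 0 < nu0) {p q : ℕ} (h : p ≤ q) :
    Aprod lam nu0 q ≤ Aprod lam nu0 p := by
  induction q, h using Nat.le_induction with
  | base => exact le_refl _
  | succ q hq ih =>
    refine le_trans ?_ ih
    rw [Aprod_succ]
    calc Aprod lam nu0 q * alphaC lam nu0 (q+1)
        ≤ Aprod lam nu0 q * 1 :=
          mul_le_mul_of_nonneg_left (alphaC_lt_one hlam hnu0 (q+1)).le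
            (Aprod_pos hlam hnu0 q).le
      _ = Aprod lam nu0 q := mul_one _

lemma Aprod_lt_one (hlam : 0 < lam) (hnu0 : 0 < nu0) {n : ℕ} (hn : 1 ≤ n) :
    Aprod lam nu0 n < 1 := by
  have h1 : Aprod lam nu0 n ≤ Aprod lam nu0 1 := Aprod_anti hlam hnu0 hn
  have h2 : Aprod lam nu0 1 = alphaC lam nu0 1 := by
    unfold Aprod; simp
  exact lt_of_le_of_lt (h1.trans_eq h2) (alphaC_lt_one hlam hnu0 1)

end Alpha
/-- Corollary (homogeneous setting), part 2: geometric convergence. -/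
theorem cpu_homogeneous_geometric_convergence
    {N J : ℕ} (hN : 2 ≤ N) (hJ : 1 ≤ J)
    (lam : ℝ) (hlam : 0 < lam)
    (f : Fin J → ℝ) (hf : ∀ j, 0 ≤ f j) (hfsum : ∑ j, f j = 1)
    (ν : Fin N → ℝ) (hν : ∀ i, 0 < ν i)
    (ζ : Fin J → (Fin N ≃ Fin N))
    (pI : ℕ → ℕ → (Fin N → Bool) → ℝ) (pR : ℕ → ℕ → ℕ → (Fin N → Bool) → ℝ)
    (hiter : IsCPUIterates lam f ζ ν pI pR)
    (nu0 : ℝ) (hnu0 : 0 < nu0) (hhom : ∀ i, ν i = nu0) :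
    ∃ φ : ℝ, 0 < φ ∧ φ < 1 ∧
      ∃ δ : ℝ, 0 < δ ∧
        (∀ k, 1 ≤ k → ∀ n ≤ N, ∀ m ∈ layer N n,
          |pI (k + 1) n m - pI k n m| ≤ φ ^ k * δ) ∧
        (∀ n ≤ N, ∀ m ∈ layer N n,
          Filter.Tendsto (fun k => |pI (k + 1) n m - pI k n m|) Filter.atTop (nhds 0)) := by
  classical
  have h4 := hiter.2.2.2.1
  have h5 := hiter.2.2.2.2.1
  set φ : ℝ := 1 - Aprod lam nu0 (N-1) with hφdef
  have hφpos : 0 < φ := by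
    have := Aprod_lt_one hlam hnu0 (n := N-1) (by omega)
    rw [hφdef]; linarith
  have hφlt1 : φ < 1 := by
    have := Aprod_pos hlam hnu0 (N-1)
    rw [hφdef]; linarith
  set M1 : ℝ := ∑ n ∈ Finset.range (N+1), ∑ m ∈ layer N n, |pI 2 n m - pI 1 n m| with hM1def
  have hLnonneg : ∀ k n, (0:ℝ) ≤ ∑ m ∈ layer N n, |pI (k+1) n m - pI k n m| :=
    fun k n => Finset.sum_nonneg (fun m _ => abs_nonneg _)
  have hM1nonneg : 0 ≤ M1 := Finset.sum_nonneg (fun n _ => hLnonneg 1 n)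
  have hL0 : ∀ k, 1 ≤ k → ∑ m ∈ layer N 0, |pI (k+1) 0 m - pI k 0 m| = 0 := by
    intro k hk
    apply Finset.sum_eq_zero
    intro m hm
    rw [h4 (k+1) (by omega) m hm, h4 k hk m hm, sub_self, abs_zero]
  have hLN : ∀ k, 1 ≤ k → ∑ m ∈ layer N N, |pI (k+1) N m - pI k N m| = 0 := by
    intro k hk
    apply Finset.sum_eq_zero
    intro m hm
    rw [h5 (k+1) (by omega) m hm, h5 k hk m hm, sub_self, abs_zero]
  have hmain : ∀ k, 1 ≤ k → ∀ n, n ≤ N →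
      ∑ m ∈ layer N n, |pI (k+1) n m - pI k n m| ≤ φ^(k-1) * M1 := by
    intro k hk
    induction k, hk using Nat.le_induction with
    | base =>
      intro n hn
      rw [show (1:ℕ) - 1 = 0 from rfl, pow_zero, one_mul, hM1def]
      exact Finset.single_le_sum (fun i _ => hLnonneg 1 i) (Finset.mem_range.mpr (by omega))
    | succ k hk ih =>
      have hX : (0:ℝ) ≤ φ^(k-1) * M1 := mul_nonneg (pow_nonneg hφpos.le _) hM1nonneg
      have hinner : ∀ n, n ≤ N - 1 →
          ∑ m ∈ layer N n, |pI (k+2) n m - pI (k+1) n m|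
            ≤ (1 - Aprod lam nu0 n) * (φ^(k-1) * M1) := by
        intro n
        induction n with
        | zero =>
          intro _
          rw [hL0 (k+1) (by omega), Aprod_zero]
          norm_num
        | succ n ihn =>
          intro hn
          have h1 := L_rec hN hlam hnu0 hf hfsum hhom hiter (k+1) (by omega) (n+1)
            (by omega) hn
          simp only [Nat.add_sub_cancel] at h1
          have h2 := ihn (by omega : n ≤ N - 1)
          have h3 := ih (n+2) (by omega)
          have hne : lam + ((n:ℝ)+1)*nu0 ≠ 0 := by positivity
          refine le_trans h1 (le_trans
            (add_le_add (mul_le_mul_of_nonneg_left h2 (by positivity))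
              (mul_le_mul_of_nonneg_left h3 (by positivity))) (le_of_eq ?_))
          rw [Aprod_succ]
          unfold alphaC
          push_cast
          field_simp
          ring
      intro n hn
      rcases Nat.lt_or_ge n N with hlt | hge
      · have h2 := hinner n (by omega)
        have h3 : 1 - Aprod lam nu0 n ≤ φ := by
          have := Aprod_anti hlam hnu0 (p := n) (q := N-1) (by omega)
          rw [hφdef]; linarith
        refine le_trans h2 ?_
        rw [show k + 1 - 1 = (k-1)+1 by omega, pow_succ]
        calc (1 - Aprod lam nu0 n) * (φ^(k-1)*M1) ≤ φ * (φ^(k-1)*M1) :=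
              mul_le_mul_of_nonneg_right h3 hX
          _ = φ^(k-1) * φ * M1 := by ring
      · have hnn : n = N := by omega
        rw [hnn, hLN (k+1) (by omega)]
        exact mul_nonneg (pow_nonneg hφpos.le _) hM1nonneg
  have hbound : ∀ k, 1 ≤ k → ∀ n, n ≤ N → ∀ m ∈ layer N n,
      |pI (k+1) n m - pI k n m| ≤ φ^k * (M1/φ + 1) := by
    intro k hk n hn m hm
    have h1 : |pI (k+1) n m - pI k n m| ≤ ∑ m' ∈ layer N n, |pI (k+1) n m' - pI k n m'| :=
      Finset.single_le_sum (f := fun m' => |pI (k+1) n m' - pI k n m'|)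
        (fun x _ => abs_nonneg _) hm
    refine le_trans (le_trans h1 (hmain k hk n hn)) ?_
    have h2 : φ^k * (M1/φ) = φ^(k-1) * M1 := by
      rw [show k = (k-1)+1 by omega, pow_succ]
      simp only [Nat.add_sub_cancel]
      field_simp
    have h3 : (0:ℝ) ≤ φ^k := pow_nonneg hφpos.le k
    calc φ^(k-1)*M1 = φ^k * (M1/φ) := h2.symm
      _ ≤ φ^k*(M1/φ) + φ^k := by linarith
      _ = φ^k * (M1/φ + 1) := by ring
  refine ⟨φ, hφpos, hφlt1, M1/φ + 1, by positivity, ?_, ?_⟩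
  · intro k hk n hn m hm
    exact hbound k hk n hn m hm
  · intro n hn m hm
    have hg : Filter.Tendsto (fun k : ℕ => φ^k * (M1/φ+1)) Filter.atTop (nhds 0) := by
      have h0 := tendsto_pow_atTop_nhds_zero_of_lt_one hφpos.le hφlt1
      simpa using h0.mul_const (M1/φ+1)
    apply squeeze_zero' (Filter.Eventually.of_forall (fun k => abs_nonneg _)) ?_ hg
    filter_upwards [Filter.eventually_ge_atTop 1] with k hk
    exact hbound k hk n hn m hm
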